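/- Suppose f : [0,T] → V* is continuously differentiable, (u,p) solves the two-field system with u and p continuously differentiable, and (ū,p̄) solves the delay two-field system with ū continuously differentiable and p̄ twice continuously differentiable on [−τ,T], where u(0) = ū(0) and p(0) = p̄(0). Then there is a constant C depending only on c_a, c_b, c_c, C_d (in particular independent of τ, t and T) such that for all t ∈ [0,T]: ∫₀ᵗ ‖ū′(s) − u′(s)‖_V² ds + ‖p̄(t) − p(t)‖_Q² ≤ C · τ² · t · sup_{s ∈ [−τ,t]} ‖p̄″(s)‖_{H_Q}². -/

import Mathlib

open Set intervalIntegral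


lemma ftc_icc {E : Type*} [NormedAddCommGroup E] [NormedSpace ℝ E] [CompleteSpace E]
    {f f' : ℝ → E} {a b : ℝ} (hab : a ≤ b)
    (hd : ∀ x ∈ Icc a b, HasDerivWithinAt f (f' x) (Icc a b) x)
    (hc : ContinuousOn f' (Icc a b)) : ∫ x in a..b, f' x = f b - f a := by
  apply integral_eq_sub_of_hasDeriv_right_of_le hab
  · exact fun x hx => (hd x hx).continuousWithinAt
  · intro x hx
    exact (hd x (Ioo_subset_Icc_self hx)).mono_of_mem_nhdsWithin
      (Icc_mem_nhdsGT_of_mem ⟨hx.1.le, hx.2⟩)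
  · exact (hc.mono (by rw [uIcc_of_le hab])).intervalIntegrable

lemma bilin_deriv {E F : Type*} [NormedAddCommGroup E] [NormedSpace ℝ E]
    [NormedAddCommGroup F] [NormedSpace ℝ F]
    (B : E →L[ℝ] F →L[ℝ] ℝ) {x : ℝ → E} {y : ℝ → F} {x' : E} {y' : F} {s : Set ℝ} {t : ℝ}
    (hx : HasDerivWithinAt x x' s t) (hy : HasDerivWithinAt y y' s t) :
    HasDerivWithinAt (fun τ => B (x τ) (y τ)) (B x' (y t) + B (x t) y') s t := by
  have h1 : HasDerivWithinAt (fun τ => B (x τ)) (B x') s t :=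
    B.hasFDerivAt.comp_hasDerivWithinAt t hx
  exact h1.clm_apply hy



open Set

set_option maxHeartbeats 1600000 in
/-- Energy estimate between the two-field solution and the delay two-field solution:
there is a constant `C` depending only on the constants of the bilinear forms
(in particular independent of `τ`, `t` and `T`) such that
`∫₀ᵗ ‖ū′ − u′‖_V² + ‖p̄(t) − p(t)‖_Q² ≤ C τ² t sup_{[−τ,t]} ‖p̄″‖_{H_Q}²`. -/
theorem stmt2 {V HV Q HQ : Type*}
    [NormedAddCommGroup V] [InnerProductSpace ℝ V] [CompleteSpace V]
    [NormedAddCommGroup HV] [InnerProductSpace ℝ HV] [CompleteSpace HV]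
    [NormedAddCommGroup Q] [InnerProductSpace ℝ Q] [CompleteSpace Q]
    [NormedAddCommGroup HQ] [InnerProductSpace ℝ HQ] [CompleteSpace HQ]
    -- continuous embeddings V ↪ H_V and Q ↪ H_Q
    (ιV : V →L[ℝ] HV) (hιV : Function.Injective ιV)
    (ιQ : Q →L[ℝ] HQ) (hιQ : Function.Injective ιQ)
    (C_VH C_QH : ℝ)
    (hCVH : ∀ v : V, ‖ιV v‖ ≤ C_VH * ‖v‖)
    (hCQH : ∀ q : Q, ‖ιQ q‖ ≤ C_QH * ‖q‖)
    -- the bilinear forms and their constants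
    (a : V →ₗ[ℝ] V →ₗ[ℝ] ℝ) (b : Q →ₗ[ℝ] Q →ₗ[ℝ] ℝ)
    (c : HQ →ₗ[ℝ] HQ →ₗ[ℝ] ℝ) (d : V →ₗ[ℝ] HQ →ₗ[ℝ] ℝ)
    (c_a C_a c_b C_b c_c C_c C_d C_d' : ℝ)
    (hc_a : 0 < c_a) (hc_b : 0 < c_b) (hc_c : 0 < c_c)
    (ha_symm : ∀ u v : V, a u v = a v u)
    (ha_coer : ∀ v : V, c_a * ‖v‖ ^ 2 ≤ a v v)
    (ha_bdd : ∀ u v : V, |a u v| ≤ C_a * ‖u‖ * ‖v‖)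
    (hb_symm : ∀ p q : Q, b p q = b q p)
    (hb_coer : ∀ q : Q, c_b * ‖q‖ ^ 2 ≤ b q q)
    (hb_bdd : ∀ p q : Q, |b p q| ≤ C_b * ‖p‖ * ‖q‖)
    (hc_symm : ∀ p q : HQ, c p q = c q p)
    (hc_coer : ∀ q : HQ, c_c * ‖q‖ ^ 2 ≤ c q q)
    (hc_bdd : ∀ p q : HQ, |c p q| ≤ C_c * ‖p‖ * ‖q‖)
    (hd_bdd : ∀ (v : V) (q : HQ), |d v q| ≤ C_d * ‖v‖ * ‖q‖)
    (hd_bdd' : ∀ (v : V) (q : Q), |d v (ιQ q)| ≤ C_d' * ‖ιV v‖ * ‖q‖) :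
    ∃ C : ℝ, 0 < C ∧
      ∀ (T τ : ℝ), 0 < T → 0 < τ →
      ∀ (f f' : ℝ → V →L[ℝ] ℝ) (g : ℝ → Q →L[ℝ] ℝ)
        (u u' : ℝ → V) (p p' : ℝ → Q)
        (ubar ubar' : ℝ → V) (pbar pbar' pbar'' : ℝ → Q),
        -- data: f continuously differentiable, g continuous
        (∀ t ∈ Icc (0:ℝ) T, HasDerivWithinAt f (f' t) (Icc 0 T) t) →
        ContinuousOn f (Icc 0 T) → ContinuousOn f' (Icc 0 T) → ContinuousOn g (Icc 0 T) →
        -- (u,p) is a C¹ solution of the two-field system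
        (∀ t ∈ Icc (0:ℝ) T, HasDerivWithinAt u (u' t) (Icc 0 T) t) →
        ContinuousOn u' (Icc 0 T) →
        (∀ t ∈ Icc (0:ℝ) T, HasDerivWithinAt p (p' t) (Icc 0 T) t) →
        ContinuousOn p' (Icc 0 T) →
        (∀ t ∈ Icc (0:ℝ) T, ∀ v : V, a (u t) v - d v (ιQ (p t)) = f t v) →
        (∀ t ∈ Icc (0:ℝ) T, ∀ q : Q,
          d (u' t) (ιQ q) + c (ιQ (p' t)) (ιQ q) + b (p t) q = g t q) →
        -- (ū,p̄) is a solution of the delay system, ū ∈ C¹([0,T]), p̄ ∈ C²([−τ,T])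
        (∀ t ∈ Icc (0:ℝ) T, HasDerivWithinAt ubar (ubar' t) (Icc 0 T) t) →
        ContinuousOn ubar' (Icc 0 T) →
        (∀ t ∈ Icc (-τ) T, HasDerivWithinAt pbar (pbar' t) (Icc (-τ) T) t) →
        (∀ t ∈ Icc (-τ) T, HasDerivWithinAt pbar' (pbar'' t) (Icc (-τ) T) t) →
        ContinuousOn pbar' (Icc (-τ) T) → ContinuousOn pbar'' (Icc (-τ) T) →
        (∀ t ∈ Icc (0:ℝ) T, ∀ v : V, a (ubar t) v - d v (ιQ (pbar (t - τ))) = f t v) →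
        (∀ t ∈ Icc (0:ℝ) T, ∀ q : Q,
          d (ubar' t) (ιQ q) + c (ιQ (pbar' t)) (ιQ q) + b (pbar t) q = g t q) →
        -- matching initial values
        u 0 = ubar 0 → p 0 = pbar 0 →
        ∀ t ∈ Icc (0:ℝ) T,
          (∫ s in (0:ℝ)..t, ‖ubar' s - u' s‖ ^ 2) + ‖pbar t - p t‖ ^ 2 ≤
            C * τ ^ 2 * t * (⨆ s : Icc (-τ) t, ‖ιQ (pbar'' (s : ℝ))‖) ^ 2 := by
  classical
  -- nonnegative version of the bound on d
  set Cd : ℝ := |C_d| with hCddef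
  have hCd0 : 0 ≤ Cd := abs_nonneg _
  have hd_bdd2 : ∀ (v : V) (q : HQ), ‖d v q‖ ≤ Cd * ‖v‖ * ‖q‖ := by
    intro v q
    rw [Real.norm_eq_abs]
    refine (hd_bdd v q).trans ?_
    have := mul_nonneg (norm_nonneg v) (norm_nonneg q)
    nlinarith [le_abs_self C_d]
  -- continuous bilinear forms
  set A : V →L[ℝ] V →L[ℝ] ℝ := LinearMap.mkContinuous₂ a C_a
    (fun x y => by rw [Real.norm_eq_abs]; exact ha_bdd x y) with hAdef
  set B : Q →L[ℝ] Q →L[ℝ] ℝ := LinearMap.mkContinuous₂ b C_b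
    (fun x y => by rw [Real.norm_eq_abs]; exact hb_bdd x y) with hBdef
  set Cc : HQ →L[ℝ] HQ →L[ℝ] ℝ := LinearMap.mkContinuous₂ c C_c
    (fun x y => by rw [Real.norm_eq_abs]; exact hc_bdd x y) with hCcdef
  set D : V →L[ℝ] HQ →L[ℝ] ℝ := LinearMap.mkContinuous₂ d Cd hd_bdd2 with hDdef
  have hAa : ∀ x y, A x y = a x y := fun _ _ => rfl
  have hBb : ∀ x y, B x y = b x y := fun _ _ => rfl
  have hCcc : ∀ x y, Cc x y = c x y := fun _ _ => rfl
  have hDd : ∀ x y, D x y = d x y := fun _ _ => rfl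
  refine ⟨Cd ^ 2 / c_a * (1 / c_a + 1 / c_b) + 1, by positivity, ?_⟩
  intro T τ hT hτ f f' g u u' p p' ubar ubar' pbar pbar' pbar''
    hf hfc hf'c hgc hu hu'c hp hp'c heq1 heq2 hubar hubar'c hpbarD hpbar'D hpbar'c hpbar''c
    heq1d heq2d hu0 hp0 t ht
  obtain ⟨ht0, htT⟩ := ht
  have hIccsub : Icc (0:ℝ) T ⊆ Icc (-τ) T := Icc_subset_Icc (by linarith) le_rfl
  have hsub0t : Icc (0:ℝ) t ⊆ Icc 0 T := Icc_subset_Icc le_rfl htT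
  obtain ⟨M, hMdef⟩ : ∃ M : ℝ, M = ⨆ s : Icc (-τ) t, ‖ιQ (pbar'' (s : ℝ))‖ := ⟨_, rfl⟩
  have hτt : -τ ≤ t := by linarith
  have hMcont : ContinuousOn (fun σ => ‖ιQ (pbar'' σ)‖) (Icc (-τ) t) :=
    (ιQ.continuous.comp_continuousOn (hpbar''c.mono (Icc_subset_Icc le_rfl htT))).norm
  have hbdd : BddAbove (range fun s : Icc (-τ) t => ‖ιQ (pbar'' (s : ℝ))‖) := by
    have := (isCompact_Icc.image_of_continuousOn hMcont).bddAbove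
    rwa [image_eq_range] at this
  have hM : ∀ σ ∈ Icc (-τ) t, ‖ιQ (pbar'' σ)‖ ≤ M := by
    intro σ hσ
    rw [hMdef]
    exact le_ciSup hbdd ⟨σ, hσ⟩
  have hM0 : 0 ≤ M := le_trans (norm_nonneg _) (hM (-τ) ⟨le_rfl, hτt⟩)
  -- difference curves
  set e' : ℝ → V := fun s => ubar' s - u' s with he'def
  set r : ℝ → Q := fun s => pbar s - p s with hrdef
  set r' : ℝ → Q := fun s => pbar' s - p' s with hr'def
  set dl : ℝ → Q := fun s => pbar' s - pbar' (s - τ) with hdldef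
  have he' : ∀ s ∈ Icc (0:ℝ) T, HasDerivWithinAt (fun σ => ubar σ - u σ) (e' s) (Icc 0 T) s :=
    fun s hs => (hubar s hs).sub (hu s hs)
  have hr : ∀ s ∈ Icc (0:ℝ) T, HasDerivWithinAt r (r' s) (Icc 0 T) s :=
    fun s hs => ((hpbarD s (hIccsub hs)).mono hIccsub).sub (hp s hs)
  have hmaps : MapsTo (fun s : ℝ => s - τ) (Icc 0 T) (Icc (-τ) T) := by
    intro x hx
    simp only [mem_Icc] at *
    constructor
    · linarith [hx.1]
    · linarith [hx.2]
  have hshift : ∀ s ∈ Icc (0:ℝ) T,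
      HasDerivWithinAt (fun σ => pbar (σ - τ)) (pbar' (s - τ)) (Icc 0 T) s := by
    intro s hs
    have h1 : HasDerivWithinAt (fun σ : ℝ => σ - τ) 1 (Icc 0 T) s :=
      (hasDerivWithinAt_id s _).sub_const τ
    have := (hpbarD (s - τ) (hmaps hs)).scomp s h1 hmaps
    rw [one_smul] at this
    exact this
  -- Step A: difference of first equations
  have hA1 : ∀ s ∈ Icc (0:ℝ) T, ∀ v : V,
      a (ubar s - u s) v = d v (ιQ (pbar (s - τ)) - ιQ (p s)) := by
    intro s hs v
    have h1 := heq1 s hs v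
    have h2 := heq1d s hs v
    simp only [map_sub, LinearMap.sub_apply]
    linarith
  -- Step B: differentiated difference of first equations
  have hB1 : ∀ s ∈ Icc (0:ℝ) T, ∀ v : V,
      a (e' s) v = d v (ιQ (pbar' (s - τ)) - ιQ (p' s)) := by
    intro s hs v
    have hΦ : HasDerivWithinAt
        (fun σ => A (ubar σ - u σ) v - (D v) (ιQ (pbar (σ - τ)) - ιQ (p σ)))
        ((A.flip v) (e' s) - (D v) (ιQ (pbar' (s - τ)) - ιQ (p' s))) (Icc 0 T) s := by
      have h1 : HasDerivWithinAt (fun σ => A (ubar σ - u σ) v) ((A.flip v) (e' s))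
          (Icc 0 T) s := (A.flip v).hasFDerivAt.comp_hasDerivWithinAt s (he' s hs)
      have h2 : HasDerivWithinAt (fun σ => ιQ (pbar (σ - τ)) - ιQ (p σ))
          (ιQ (pbar' (s - τ)) - ιQ (p' s)) (Icc 0 T) s :=
        (ιQ.hasFDerivAt.comp_hasDerivWithinAt s (hshift s hs)).sub
          (ιQ.hasFDerivAt.comp_hasDerivWithinAt s (hp s hs))
      exact h1.sub ((D v).hasFDerivAt.comp_hasDerivWithinAt s h2)
    have hΦ0 : HasDerivWithinAt
        (fun σ => A (ubar σ - u σ) v - (D v) (ιQ (pbar (σ - τ)) - ιQ (p σ)))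
        0 (Icc 0 T) s := by
      refine (hasDerivWithinAt_const s (Icc 0 T) (0:ℝ)).congr (fun y hy => ?_) ?_
      · rw [hAa, hDd, hA1 y hy v]
        exact sub_self _
      · rw [hAa, hDd, hA1 s hs v]
        exact sub_self _
    have heqd := (uniqueDiffOn_Icc hT s hs).eq_deriv _ hΦ hΦ0
    have h6 : (A.flip v) (e' s) = a (e' s) v := rfl
    rw [h6, hDd] at heqd
    exact sub_eq_zero.mp heqd
  -- Step C: difference of second equations
  have hC1 : ∀ s ∈ Icc (0:ℝ) T, ∀ q : Q,
      d (e' s) (ιQ q) + c (ιQ (r' s)) (ιQ q) + b (r s) q = 0 := by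
    intro s hs q
    have h1 := heq2 s hs q
    have h2 := heq2d s hs q
    simp only [he'def, hr'def, hrdef, map_sub, LinearMap.sub_apply]
    linarith
  -- key pointwise identity
  have hkey : ∀ s ∈ Icc (0:ℝ) T,
      b (r s) (r' s) =
        -(a (e' s) (e' s) + c (ιQ (r' s)) (ιQ (r' s)) + d (e' s) (ιQ (dl s))) := by
    intro s hs
    have h1 := hB1 s hs (e' s)
    have h2 := hC1 s hs (r' s)
    have hsplit : ιQ (pbar' (s - τ)) - ιQ (p' s) = ιQ (r' s) - ιQ (dl s) := by
      simp only [hr'def, hdldef, map_sub]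
      abel
    rw [hsplit, (d (e' s)).map_sub] at h1
    linarith
  -- derivative of the b-energy
  have hβ2 : ∀ s ∈ Icc (0:ℝ) T, HasDerivWithinAt (fun σ => B (r σ) (r σ))
      ((-2) * (a (e' s) (e' s) + c (ιQ (r' s)) (ιQ (r' s)) + d (e' s) (ιQ (dl s))))
      (Icc 0 T) s := by
    intro s hs
    have h := bilin_deriv B (hr s hs) (hr s hs)
    have hval : B (r' s) (r s) + B (r s) (r' s)
        = (-2) * (a (e' s) (e' s) + c (ιQ (r' s)) (ιQ (r' s)) + d (e' s) (ιQ (dl s))) := by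
      have h1 : B (r' s) (r s) = b (r s) (r' s) := by rw [hBb]; exact hb_symm _ _
      have h2 : B (r s) (r' s) = b (r s) (r' s) := hBb _ _
      rw [h1, h2, hkey s hs]; ring
    rwa [hval] at h
  -- continuity facts
  have he'c : ContinuousOn e' (Icc 0 T) := hubar'c.sub hu'c
  have hr'c : ContinuousOn r' (Icc 0 T) := (hpbar'c.mono hIccsub).sub hp'c
  have hrc : ContinuousOn r (Icc 0 T) := fun s hs => (hr s hs).continuousWithinAt
  have hdlC : ContinuousOn dl (Icc 0 T) := by
    refine (hpbar'c.mono hIccsub).sub ?_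
    exact hpbar'c.comp ((continuous_id.sub continuous_const).continuousOn) hmaps
  have hXc : ContinuousOn (fun s => a (e' s) (e' s)) (Icc 0 T) := by
    have : ContinuousOn (fun s => A (e' s) (e' s)) (Icc 0 T) :=
      (A.continuous.comp_continuousOn he'c).clm_apply he'c
    simpa [hAa] using this
  have hYc : ContinuousOn (fun s => c (ιQ (r' s)) (ιQ (r' s))) (Icc 0 T) := by
    have hc1 : ContinuousOn (fun s => ιQ (r' s)) (Icc 0 T) :=
      ιQ.continuous.comp_continuousOn hr'c
    have : ContinuousOn (fun s => Cc (ιQ (r' s)) (ιQ (r' s))) (Icc 0 T) :=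
      (Cc.continuous.comp_continuousOn hc1).clm_apply hc1
    simpa [hCcc] using this
  have hZc : ContinuousOn (fun s => d (e' s) (ιQ (dl s))) (Icc 0 T) := by
    have : ContinuousOn (fun s => D (e' s) (ιQ (dl s))) (Icc 0 T) :=
      (D.continuous.comp_continuousOn he'c).clm_apply (ιQ.continuous.comp_continuousOn hdlC)
    simpa [hDd] using this
  have hnc : ContinuousOn (fun s => ‖e' s‖ ^ 2) (Icc 0 T) := (he'c.norm).pow 2
  -- integrability on [0, t]
  have huIcc : uIcc (0:ℝ) t = Icc 0 t := uIcc_of_le ht0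
  have hIX : IntervalIntegrable (fun s => a (e' s) (e' s)) MeasureTheory.volume 0 t :=
    (hXc.mono (by rw [huIcc]; exact hsub0t)).intervalIntegrable
  have hIY : IntervalIntegrable (fun s => c (ιQ (r' s)) (ιQ (r' s))) MeasureTheory.volume 0 t :=
    (hYc.mono (by rw [huIcc]; exact hsub0t)).intervalIntegrable
  have hIZ : IntervalIntegrable (fun s => d (e' s) (ιQ (dl s))) MeasureTheory.volume 0 t :=
    (hZc.mono (by rw [huIcc]; exact hsub0t)).intervalIntegrable
  have hIn : IntervalIntegrable (fun s => ‖e' s‖ ^ 2) MeasureTheory.volume 0 t :=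
    (hnc.mono (by rw [huIcc]; exact hsub0t)).intervalIntegrable
  -- energy identity via FTC
  have hr0 : r 0 = 0 := by simp [hrdef, hp0]
  have hftc : ∫ s in (0:ℝ)..t,
      (-2) * (a (e' s) (e' s) + c (ιQ (r' s)) (ιQ (r' s)) + d (e' s) (ιQ (dl s)))
      = B (r t) (r t) - B (r 0) (r 0) := by
    apply ftc_icc ht0 (fun x hx => (hβ2 x (hsub0t hx)).mono hsub0t)
    exact (continuousOn_const.mul ((hXc.add hYc).add hZc)).mono hsub0t
  have hsplitI : (∫ s in (0:ℝ)..t,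
        (-2) * (a (e' s) (e' s) + c (ιQ (r' s)) (ιQ (r' s)) + d (e' s) (ιQ (dl s))))
      = (-2) * ((∫ s in (0:ℝ)..t, a (e' s) (e' s))
        + (∫ s in (0:ℝ)..t, c (ιQ (r' s)) (ιQ (r' s)))
        + (∫ s in (0:ℝ)..t, d (e' s) (ιQ (dl s)))) := by
    rw [intervalIntegral.integral_const_mul]
    congr 1
    rw [intervalIntegral.integral_add (hIX.add hIY) hIZ, intervalIntegral.integral_add hIX hIY]
  have h0B : B (r 0) (r 0) = 0 := by rw [hr0]; simp
  have hBt : B (r t) (r t) = b (r t) (r t) := hBb _ _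
  rw [hsplitI, h0B, hBt, sub_zero] at hftc
  -- hftc : -2 * (IX + IY + IZ) = b (r t) (r t)
  -- bound on ‖ιQ (dl s)‖
  have hdlbound : ∀ s ∈ Icc (0:ℝ) t, ‖ιQ (dl s)‖ ≤ τ * M := by
    intro s hs
    have hsτ : s - τ ≤ s := by linarith
    have hsub2 : Icc (s - τ) s ⊆ Icc (-τ) T :=
      Icc_subset_Icc (by linarith [hs.1]) (by linarith [hs.2])
    have hftc2 : ∫ σ in (s - τ)..s, ιQ (pbar'' σ) = ιQ (pbar' s) - ιQ (pbar' (s - τ)) := by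
      apply ftc_icc hsτ
      · intro x hx
        exact ιQ.hasFDerivAt.comp_hasDerivWithinAt x ((hpbar'D x (hsub2 hx)).mono hsub2)
      · exact ιQ.continuous.comp_continuousOn (hpbar''c.mono hsub2)
    have hEq : ιQ (dl s) = ∫ σ in (s - τ)..s, ιQ (pbar'' σ) := by
      rw [hftc2, hdldef]; simp [map_sub]
    rw [hEq]
    have hb2 : ‖∫ σ in (s - τ)..s, ιQ (pbar'' σ)‖ ≤ M * |s - (s - τ)| := by
      apply intervalIntegral.norm_integral_le_of_norm_le_const
      intro x hx
      rw [uIoc_of_le hsτ] at hx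
      exact hM x ⟨by linarith [hx.1.le, hs.1], by linarith [hx.2, hs.2]⟩
    have habs : |s - (s - τ)| = τ := by
      rw [show s - (s - τ) = τ by ring, abs_of_nonneg hτ.le]
    calc ‖∫ σ in (s - τ)..s, ιQ (pbar'' σ)‖ ≤ M * |s - (s - τ)| := hb2
      _ = τ * M := by rw [habs]; ring
  -- pointwise lower bound for the d-term
  obtain ⟨K2, hK2def⟩ : ∃ K2 : ℝ, K2 = Cd ^ 2 * τ ^ 2 * M ^ 2 / (2 * c_a) := ⟨_, rfl⟩
  have hZpt : ∀ s ∈ Icc (0:ℝ) t,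
      -(c_a / 2 * ‖e' s‖ ^ 2 + K2) ≤ d (e' s) (ιQ (dl s)) := by
    intro s hs
    have h1 : |d (e' s) (ιQ (dl s))| ≤ Cd * ‖e' s‖ * ‖ιQ (dl s)‖ := by
      have := hd_bdd2 (e' s) (ιQ (dl s)); rwa [Real.norm_eq_abs] at this
    have h2 : Cd * ‖e' s‖ * ‖ιQ (dl s)‖ ≤ Cd * ‖e' s‖ * (τ * M) :=
      mul_le_mul_of_nonneg_left (hdlbound s hs) (mul_nonneg hCd0 (norm_nonneg _))
    have h3 : Cd * ‖e' s‖ * (τ * M) ≤ c_a / 2 * ‖e' s‖ ^ 2 + K2 := by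
      have hca' : c_a ≠ 0 := ne_of_gt hc_a
      have hK2' : 2 * c_a * K2 = Cd ^ 2 * τ ^ 2 * M ^ 2 := by
        rw [hK2def]; field_simp
      have h3' : 2 * c_a * (Cd * ‖e' s‖ * (τ * M)) ≤ 2 * c_a * (c_a / 2 * ‖e' s‖ ^ 2 + K2) := by
        linarith only [sq_nonneg (c_a * ‖e' s‖ - Cd * (τ * M)), hK2']
      exact le_of_mul_le_mul_left h3' (by positivity)
    have h4 := abs_le.mp (h1.trans (h2.trans h3))
    linarith only [h4.1]
  have hlhs : (∫ s in (0:ℝ)..t, -(c_a / 2 * ‖e' s‖ ^ 2 + K2))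
      = -(c_a / 2 * (∫ s in (0:ℝ)..t, ‖e' s‖ ^ 2) + K2 * t) := by
    rw [intervalIntegral.integral_neg,
      intervalIntegral.integral_add (hIn.const_mul (c_a / 2)) intervalIntegrable_const,
      intervalIntegral.integral_const_mul, intervalIntegral.integral_const]
    simp only [smul_eq_mul, sub_zero]
    ring_nf
  have hint1 : IntervalIntegrable (fun s => -(c_a / 2 * ‖e' s‖ ^ 2 + K2))
      MeasureTheory.volume 0 t :=
    ((hIn.const_mul (c_a / 2)).add intervalIntegrable_const).neg
  have hZlow := intervalIntegral.integral_mono_on ht0 hint1 hIZ hZpt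
  rw [hlhs] at hZlow
  -- integral inequalities
  have hXlow : c_a * (∫ s in (0:ℝ)..t, ‖e' s‖ ^ 2) ≤ ∫ s in (0:ℝ)..t, a (e' s) (e' s) := by
    rw [← intervalIntegral.integral_const_mul]
    exact intervalIntegral.integral_mono_on ht0 (hIn.const_mul c_a) hIX
      (fun x _ => ha_coer (e' x))
  have hYlow : 0 ≤ ∫ s in (0:ℝ)..t, c (ιQ (r' s)) (ιQ (r' s)) := by
    apply intervalIntegral.integral_nonneg ht0
    intro x _
    exact le_trans (mul_nonneg hc_c.le (sq_nonneg _)) (hc_coer (ιQ (r' x)))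
  have hInn : 0 ≤ ∫ s in (0:ℝ)..t, ‖e' s‖ ^ 2 :=
    intervalIntegral.integral_nonneg ht0 (fun x _ => sq_nonneg _)
  have hrt : c_b * ‖r t‖ ^ 2 ≤ b (r t) (r t) := hb_coer (r t)
  -- assemble
  set Iee : ℝ := ∫ s in (0:ℝ)..t, ‖e' s‖ ^ 2 with hIeedef
  have hK : 2 * (K2 * t) = Cd ^ 2 * τ ^ 2 * M ^ 2 / c_a * t := by
    have hca' : c_a ≠ 0 := ne_of_gt hc_a
    rw [hK2def]; field_simp
  have hfinal : c_a * Iee + c_b * ‖r t‖ ^ 2 ≤ Cd ^ 2 * τ ^ 2 * M ^ 2 / c_a * t := by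
    linarith only [hftc, hXlow, hYlow, hZlow, hrt, hK]
  have h1 : Iee ≤ Cd ^ 2 * τ ^ 2 * M ^ 2 / c_a * t / c_a := by
    rw [le_div_iff₀ hc_a]
    linarith only [hfinal, mul_nonneg hc_b.le (sq_nonneg ‖r t‖)]
  have h2 : ‖r t‖ ^ 2 ≤ Cd ^ 2 * τ ^ 2 * M ^ 2 / c_a * t / c_b := by
    rw [le_div_iff₀ hc_b]
    linarith only [hfinal, mul_nonneg hc_a.le hInn]
  have hτ2M2t : 0 ≤ τ ^ 2 * t * M ^ 2 := by positivity
  have hgoal : Iee + ‖r t‖ ^ 2 ≤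
      (Cd ^ 2 / c_a * (1 / c_a + 1 / c_b) + 1) * τ ^ 2 * t * M ^ 2 := by
    have hsum : Cd ^ 2 * τ ^ 2 * M ^ 2 / c_a * t / c_a + Cd ^ 2 * τ ^ 2 * M ^ 2 / c_a * t / c_b
        + τ ^ 2 * t * M ^ 2
        = (Cd ^ 2 / c_a * (1 / c_a + 1 / c_b) + 1) * τ ^ 2 * t * M ^ 2 := by
      have hca' : c_a ≠ 0 := ne_of_gt hc_a
      have hcb' : c_b ≠ 0 := ne_of_gt hc_b
      field_simp
    linarith only [h1, h2, hτ2M2t, hsum]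
  have hrt2 : ‖pbar t - p t‖ = ‖r t‖ := by simp [hrdef]
  rw [hrt2, ← hMdef]
  exact hgoal
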